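/- For every symbol a ∈ Σ and every language L ⊆ Σ*, the left quotient of the shuffle closure satisfies a\(L^‖) = (a\L) ‖ L^‖. -/

import Mathlib

variable {α : Type*}

/-- The shuffle of two words: `ε ‖ v = {v}`, `u ‖ ε = {u}`,
`(a·u) ‖ (b·v) = {a}·(u ‖ (b·v)) ∪ {b}·((a·u) ‖ v)`. -/
def wordShuffle : List α → List α → Set (List α)
  | [], v => {v}
  | a :: u, [] => {a :: u}
  | a :: u, b :: v =>
      (fun w => a :: w) '' wordShuffle u (b :: v) ∪ (fun w => b :: w) '' wordShuffle (a :: u) v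
  termination_by u v => u.length + v.length

lemma nil_shuffle (v : List α) : wordShuffle [] v = {v} := by simp [wordShuffle]

lemma shuffle_nil (u : List α) : wordShuffle u [] = {u} := by
  cases u <;> simp [wordShuffle]

lemma mem_nil_shuffle {u v : List α} (h : ([] : List α) ∈ wordShuffle u v) :
    u = [] ∧ v = [] := by
  cases u with
  | nil => rw [nil_shuffle] at h; exact ⟨rfl, h.symm⟩
  | cons a u =>
    cases v with
    | nil => rw [shuffle_nil] at h; simp at h
    | cons b v => simp [wordShuffle] at h

lemma cons_left {w u v : List α} {a : α} (h : w ∈ wordShuffle u v) :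
    a :: w ∈ wordShuffle (a :: u) v := by
  cases v with
  | nil => rw [shuffle_nil] at h ⊢; simp_all
  | cons b v =>
    rw [wordShuffle]
    exact Set.mem_union_left _ (Set.mem_image_of_mem _ h)

lemma cons_right {w u v : List α} {b : α} (h : w ∈ wordShuffle u v) :
    b :: w ∈ wordShuffle u (b :: v) := by
  cases u with
  | nil => rw [nil_shuffle] at h ⊢; simp_all
  | cons a u =>
    rw [wordShuffle]
    exact Set.mem_union_right _ (Set.mem_image_of_mem _ h)

lemma uncons {w u v : List α} {a : α} (h : a :: w ∈ wordShuffle u v) :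
    (∃ u', u = a :: u' ∧ w ∈ wordShuffle u' v) ∨
    (∃ v', v = a :: v' ∧ w ∈ wordShuffle u v') := by
  cases u with
  | nil =>
    rw [nil_shuffle] at h
    exact Or.inr ⟨w, h.symm, by rw [nil_shuffle]; rfl⟩
  | cons c u =>
    cases v with
    | nil =>
      rw [shuffle_nil] at h
      obtain ⟨rfl, rfl⟩ : c = a ∧ (u : List α) = w := by simpa using h.symm
      exact Or.inl ⟨u, rfl, by rw [shuffle_nil]; rfl⟩
    | cons b v =>
      rw [wordShuffle] at h
      rcases h with ⟨x, hx, hxe⟩ | ⟨x, hx, hxe⟩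
      · obtain ⟨rfl, rfl⟩ : c = a ∧ x = w := by simpa using hxe
        exact Or.inl ⟨u, rfl, hx⟩
      · obtain ⟨rfl, rfl⟩ : b = a ∧ x = w := by simpa using hxe
        exact Or.inr ⟨v, rfl, hx⟩

lemma shuffle_comm_mem {w : List α} : ∀ {u v : List α},
    w ∈ wordShuffle u v → w ∈ wordShuffle v u := by
  induction w with
  | nil =>
    intro u v h
    obtain ⟨rfl, rfl⟩ := mem_nil_shuffle h
    exact h
  | cons d w ih =>
    intro u v h
    rcases uncons h with ⟨u', rfl, h'⟩ | ⟨v', rfl, h'⟩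
    · exact cons_right (ih h')
    · exact cons_left (ih h')

lemma shuffle_assoc {s : List α} : ∀ {u t v w : List α},
    s ∈ wordShuffle u t → t ∈ wordShuffle v w →
    ∃ r, r ∈ wordShuffle u v ∧ s ∈ wordShuffle r w := by
  induction s with
  | nil =>
    intro u t v w h1 h2
    obtain ⟨rfl, rfl⟩ := mem_nil_shuffle h1
    obtain ⟨rfl, rfl⟩ := mem_nil_shuffle h2
    exact ⟨[], by rw [nil_shuffle]; rfl, by rw [nil_shuffle]; rfl⟩
  | cons d s ih =>
    intro u t v w h1 h2
    rcases uncons h1 with ⟨u', rfl, h1'⟩ | ⟨t', rfl, h1'⟩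
    · obtain ⟨r, hr, hs⟩ := ih h1' h2
      exact ⟨d :: r, cons_left hr, cons_left hs⟩
    · rcases uncons h2 with ⟨v', rfl, h2'⟩ | ⟨w', rfl, h2'⟩
      · obtain ⟨r, hr, hs⟩ := ih h1' h2'
        exact ⟨d :: r, cons_right hr, cons_left hs⟩
      · obtain ⟨r, hr, hs⟩ := ih h1' h2'
        exact ⟨r, hr, cons_right hs⟩

lemma shuffle_assoc' {s u v w r : List α} (h1 : s ∈ wordShuffle r w)
    (h2 : r ∈ wordShuffle u v) : ∃ t, t ∈ wordShuffle v w ∧ s ∈ wordShuffle u t := by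
  obtain ⟨p, hp, hs⟩ := shuffle_assoc (shuffle_comm_mem h1) (shuffle_comm_mem h2)
  exact ⟨p, shuffle_comm_mem hp, shuffle_comm_mem hs⟩

lemma shuffle_exchange {w u t x y : List α} (h1 : w ∈ wordShuffle u t)
    (h2 : t ∈ wordShuffle x y) : ∃ q, q ∈ wordShuffle u y ∧ w ∈ wordShuffle x q := by
  obtain ⟨p, hp, hw⟩ := shuffle_assoc' (shuffle_comm_mem h1) h2
  exact ⟨p, shuffle_comm_mem hp, hw⟩

/-- The shuffle of two languages: `L₁ ‖ L₂ = ⋃ { u ‖ v | u ∈ L₁, v ∈ L₂ }`. -/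
def langShuffle (L₁ L₂ : Language α) : Language α :=
  ⋃ u ∈ L₁, ⋃ v ∈ L₂, wordShuffle u v

lemma mem_langShuffle {w : List α} {L₁ L₂ : Language α} :
    w ∈ langShuffle L₁ L₂ ↔ ∃ u ∈ L₁, ∃ v ∈ L₂, w ∈ wordShuffle u v := by
  rw [langShuffle]
  show w ∈ (⋃ u ∈ L₁, ⋃ v ∈ L₂, wordShuffle u v : Set (List α)) ↔ _
  rw [Set.mem_iUnion₂]
  simp [Set.mem_iUnion₂]

/-- The left quotient of a language by a symbol: `a\L = { w | a·w ∈ L }`. -/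
def leftQuot (a : α) (L : Language α) : Language α :=
  { w | a :: w ∈ L }

/-- The `n`-fold shuffle of `L` with itself; the `0`-fold shuffle is `{ε}`. -/
def shufflePow (L : Language α) : ℕ → Language α
  | 0 => {[]}
  | n + 1 => langShuffle L (shufflePow L n)

/-- The shuffle closure `L^‖ = {ε} ∪ L ∪ (L ‖ L) ∪ (L ‖ L ‖ L) ∪ …`. -/
def shuffleClosure (L : Language α) : Language α :=
  ⋃ n : ℕ, shufflePow L n

theorem leftQuot_shuffleClosure (a : α) (L : Language α) :
    leftQuot a (shuffleClosure L) = langShuffle (leftQuot a L) (shuffleClosure L) := by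
  have aux : ∀ n (w : List α), a :: w ∈ shufflePow L n →
      ∃ u, u ∈ leftQuot a L ∧ ∃ q, q ∈ shuffleClosure L ∧ w ∈ wordShuffle u q := by
    intro n
    induction n with
    | zero =>
      intro w hw
      exact absurd (hw : a :: w ∈ ({[]} : Language α)) (List.cons_ne_nil a w)
    | succ n ih =>
      intro w hw
      rw [shufflePow, mem_langShuffle] at hw
      obtain ⟨u, hu, v, hv, hw⟩ := hw
      rcases uncons hw with ⟨u', rfl, h'⟩ | ⟨v', rfl, h'⟩
      · exact ⟨u', hu, v, Set.mem_iUnion.2 ⟨n, hv⟩, h'⟩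
      · obtain ⟨x, hx, q, hq, hv'⟩ := ih v' hv
        obtain ⟨m, hqm⟩ := Set.mem_iUnion.1 hq
        obtain ⟨p, hp, hwp⟩ := shuffle_exchange h' hv'
        refine ⟨x, hx, p, Set.mem_iUnion.2 ⟨m + 1, ?_⟩, hwp⟩
        rw [shufflePow]
        refine mem_langShuffle.2 ?_
        exact ⟨u, hu, q, hqm, hp⟩
  ext w
  constructor
  · intro h
    obtain ⟨n, hn⟩ := Set.mem_iUnion.1 h
    obtain ⟨u, hu, q, hq, hwq⟩ := aux n w hn
    exact mem_langShuffle.2 ⟨u, hu, q, hq, hwq⟩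
  · intro h
    rw [mem_langShuffle] at h
    obtain ⟨u, hu, v, hv, hw⟩ := h
    obtain ⟨n, hn⟩ := Set.mem_iUnion.1 hv
    show a :: w ∈ shuffleClosure L
    refine Set.mem_iUnion.2 ⟨n + 1, ?_⟩
    rw [shufflePow]
    refine mem_langShuffle.2 ?_
    exact ⟨a :: u, hu, v, hn, cons_left hw⟩
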